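/- Let Z ∈ ℝ^{n×k} with ZᵀZ = I_k, let Θ ∈ ℝ^{k×k} be diagonal with nonnegative diagonal entries, let c > 0, and set D = I_k − (c Θ + I_k)^{−1/2}, where (cΘ + I_k)^{−1/2} is the diagonal matrix with entries (cθ_i + 1)^{−1/2}. Then (I_n − Z D Zᵀ)(I_n − Z D Zᵀ) = (I_n + c Z Θ Zᵀ)⁻¹; i.e., I_n − ZDZᵀ is a symmetric square root of the inverse of I_n + cZΘZᵀ. -/
import Mathlib


open Matrix

lemma aux_prod {n k : ℕ} (Z : Matrix (Fin n) (Fin k) ℝ) (hZ : Zᵀ * Z = 1)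
    (A B : Matrix (Fin k) (Fin k) ℝ) :
    (1 - Z * A * Zᵀ) * (1 - Z * B * Zᵀ) = 1 - Z * (A + B - A * B) * Zᵀ := by
  have hZZ : ∀ X : Matrix (Fin k) (Fin n) ℝ, Zᵀ * (Z * X) = X := fun X => by
    rw [← Matrix.mul_assoc, hZ, Matrix.one_mul]
  have h : Z * A * Zᵀ * (Z * B * Zᵀ) = Z * (A * B) * Zᵀ := by
    simp only [Matrix.mul_assoc]
    rw [hZZ]
  simp only [Matrix.sub_mul, Matrix.mul_sub, Matrix.add_mul, Matrix.mul_add,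
    Matrix.one_mul, Matrix.mul_one, h]
  abel

/-- with ZᵀZ = I_k, Θ = diag(θ) with θᵢ ≥ 0, c > 0 and
D = I_k − (cΘ + I_k)^{−1/2} (diagonal with entries 1 − (cθᵢ+1)^{−1/2}),
the matrix I_n − ZDZᵀ is a symmetric square root of (I_n + cZΘZᵀ)⁻¹:
(I_n − ZDZᵀ)(I_n − ZDZᵀ) = (I_n + cZΘZᵀ)⁻¹. -/
theorem low_rank_inverse_sqrt
    {n k : ℕ} (hk1 : 1 ≤ k) (hkn : k ≤ n)
    (Z : Matrix (Fin n) (Fin k) ℝ) (hZ : Zᵀ * Z = 1)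
    (θ : Fin k → ℝ) (hθ : ∀ i, 0 ≤ θ i)
    (c : ℝ) (hc : 0 < c)
    (D : Matrix (Fin k) (Fin k) ℝ)
    (hD : D = 1 - Matrix.diagonal (fun i => (Real.sqrt (c * θ i + 1))⁻¹)) :
    (1 - Z * D * Zᵀ) * (1 - Z * D * Zᵀ)
      = (1 + c • (Z * Matrix.diagonal θ * Zᵀ))⁻¹ := by
  have hpos : ∀ i, 0 < c * θ i + 1 := fun i => by nlinarith [hθ i]
  have hEE : Matrix.diagonal (fun i => (Real.sqrt (c * θ i + 1))⁻¹) *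
      Matrix.diagonal (fun i => (Real.sqrt (c * θ i + 1))⁻¹)
      = Matrix.diagonal (fun i => (c * θ i + 1)⁻¹) := by
    have : ∀ i, (Real.sqrt (c * θ i + 1))⁻¹ * (Real.sqrt (c * θ i + 1))⁻¹
        = (c * θ i + 1)⁻¹ := fun i => by
      rw [← mul_inv, Real.mul_self_sqrt (hpos i).le]
    rw [Matrix.diagonal_mul_diagonal]
    exact congrArg _ (funext this)
  have hDD : D + D - D * D
      = 1 - Matrix.diagonal (fun i => (c * θ i + 1)⁻¹) := by
    subst hD
    simp only [Matrix.mul_sub, Matrix.sub_mul, Matrix.mul_one, Matrix.one_mul, hEE]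
    abel
  have hsq : (1 - Z * D * Zᵀ) * (1 - Z * D * Zᵀ)
      = 1 - Z * (1 - Matrix.diagonal (fun i => (c * θ i + 1)⁻¹)) * Zᵀ := by
    rw [aux_prod Z hZ, hDD]
  have hA : (1 : Matrix (Fin n) (Fin n) ℝ) + c • (Z * Matrix.diagonal θ * Zᵀ)
      = 1 - Z * (-(c • Matrix.diagonal θ)) * Zᵀ := by
    rw [Matrix.mul_neg, Matrix.neg_mul, sub_neg_eq_add]
    congr 1
    rw [Matrix.mul_smul, Matrix.smul_mul]
  have key : (1 - Z * D * Zᵀ) * (1 - Z * D * Zᵀ) *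
      (1 + c • (Z * Matrix.diagonal θ * Zᵀ)) = 1 := by
    rw [hsq, hA, aux_prod Z hZ]
    have h0 : (1 - Matrix.diagonal (fun i => (c * θ i + 1)⁻¹)) + (-(c • Matrix.diagonal θ))
        - (1 - Matrix.diagonal (fun i => (c * θ i + 1)⁻¹)) * (-(c • Matrix.diagonal θ))
        = 0 := by
      have e1 : (1 - Matrix.diagonal (fun i => (c * θ i + 1)⁻¹)) * (-(c • Matrix.diagonal θ))
          = -(c • ((1 - Matrix.diagonal (fun i => (c * θ i + 1)⁻¹)) * Matrix.diagonal θ)) := by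
        rw [Matrix.mul_neg, Matrix.mul_smul]
      rw [e1, Matrix.sub_mul, Matrix.one_mul, Matrix.diagonal_mul_diagonal]
      ext i j
      rcases eq_or_ne i j with rfl | hij
      · simp only [Matrix.sub_apply, Matrix.add_apply, Matrix.neg_apply, Matrix.smul_apply,
          Matrix.diagonal_apply_eq, Matrix.one_apply_eq, Matrix.zero_apply, smul_eq_mul]
        have h1 : c * θ i + 1 ≠ 0 := (hpos i).ne'
        field_simp
        ring
      · simp [Matrix.one_apply_ne hij, Matrix.diagonal_apply_ne _ hij]
    rw [h0]
    simp
  rw [eq_comm]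
  exact Matrix.inv_eq_left_inv key
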